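/- Let p be a generic configuration of n points in ℂ^d with n ≥ d+2, let π be the projection to ℂ^{d-1} forgetting the last coordinate, and let L = π⁻¹(π(p)) be the affine space of lifts of q := π(p). Then L contains infinitely many generic configurations lying in pairwise distinct affine classes: for any finite list of configurations p¹,...,p^k ∈ L there exists a generic p' ∈ L that is not an affine image of any pⁱ. -/

import Mathlib

open MvPolynomial in
/-- Combining an algebraically independent family over ℚ lying in an intermediate field `K`
with a family algebraically independent over `K`. -/
lemma my_sumElim_algIndep {ι ι' : Type} (K : IntermediateField ℚ ℂ)
    (x : ι → ℂ) (t : ι' → ℂ) (hx : AlgebraicIndependent ℚ x) (hxK : ∀ i, x i ∈ K)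
    (ht : AlgebraicIndependent K t) :
    AlgebraicIndependent ℚ (Sum.elim t x) := by
  classical
  set xK : ι → K := fun i => ⟨x i, hxK i⟩ with hxKdef
  have hxK' : AlgebraicIndependent ℚ xK := by
    apply AlgebraicIndependent.of_comp (K.val)
    convert hx using 1
    rfl
  have hφ : Function.Injective (MvPolynomial.aeval xK : MvPolynomial ι ℚ →ₐ[ℚ] K) :=
    algebraicIndependent_iff_injective_aeval.mp hxK'
  have hψ : Function.Injective
      (MvPolynomial.map (MvPolynomial.aeval xK : MvPolynomial ι ℚ →ₐ[ℚ] K).toRingHom :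
        MvPolynomial ι' (MvPolynomial ι ℚ) →+* MvPolynomial ι' K) :=
    MvPolynomial.map_injective _ hφ
  have hθ : Function.Injective (MvPolynomial.aeval t : MvPolynomial ι' K →ₐ[K] ℂ) :=
    algebraicIndependent_iff_injective_aeval.mp ht
  rw [algebraicIndependent_iff_injective_aeval]
  have key : (MvPolynomial.aeval (Sum.elim t x) : MvPolynomial (ι' ⊕ ι) ℚ →ₐ[ℚ] ℂ).toRingHom =
      ((MvPolynomial.aeval t : MvPolynomial ι' K →ₐ[K] ℂ).toRingHom.comp
        ((MvPolynomial.map (MvPolynomial.aeval xK : MvPolynomial ι ℚ →ₐ[ℚ] K).toRingHom).comp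
          (MvPolynomial.sumAlgEquiv ℚ ι' ι).toRingEquiv.toRingHom)) := by
    apply MvPolynomial.ringHom_ext
    · intro r
      simp [MvPolynomial.sumAlgEquiv_C_inl]
    · rintro (j | i)
      · simp [MvPolynomial.sumAlgEquiv_X_inl]
      · simp [MvPolynomial.sumAlgEquiv_X_inr, hxKdef]
  have : Function.Injective
      (MvPolynomial.aeval (Sum.elim t x) : MvPolynomial (ι' ⊕ ι) ℚ →ₐ[ℚ] ℂ).toRingHom := by
    rw [key]
    exact hθ.comp (hψ.comp (MvPolynomial.sumAlgEquiv ℚ ι' ι).toRingEquiv.injective)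
  exact this

open Cardinal in
/-- Over a countable intermediate field of ℂ there exist arbitrarily many algebraically
independent elements. -/
lemma my_exists_indep (K : IntermediateField ℚ ℂ) (hK : #K ≤ ℵ₀) (n : ℕ) :
    ∃ t : Fin n → ℂ, AlgebraicIndependent K t := by
  obtain ⟨s, hs⟩ := exists_isTranscendenceBasis K ℂ
  have hcard : #ℂ = #s := by
    simpa only [Cardinal.lift_id] using
    IsAlgClosed.cardinal_eq_cardinal_transcendence_basis_of_aleph0_lt _ hs hK
      (mk_complex ▸ aleph0_lt_continuum)
  have hfin : #(Fin n) ≤ #s := by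
    rw [← hcard, mk_complex]
    exact (mk_fin n ▸ (nat_lt_aleph0 n).le).trans aleph0_le_continuum
  obtain ⟨emb⟩ := Cardinal.le_def _ _ |>.mp hfin
  exact ⟨fun i => (emb i : ℂ), hs.1.comp emb emb.injective⟩

/-- A nonzero annihilating functional for `d+1` vectors in `K^n` with `n ≥ d+2`. -/
lemma my_exists_ann (K : Type) [Field K] (n d : ℕ) (hn : d + 2 ≤ n) (w : Fin n → Fin d → K) :
    ∃ l : Fin n → K, l ≠ 0 ∧ (∀ c, ∑ i, l i * w i c = 0) ∧ ∑ i, l i = 0 := by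
  classical
  let Φ : (Fin n → K) →ₗ[K] ((Fin d → K) × K) :=
    { toFun := fun l => (fun c => ∑ i, l i * w i c, ∑ i, l i)
      map_add' := by intro a b; ext c <;> simp [add_mul, Finset.sum_add_distrib]
      map_smul' := by intro m a; ext c <;> simp [Finset.mul_sum, mul_assoc] }
  have hnotinj : ¬ Function.Injective Φ := by
    intro h
    have := LinearMap.finrank_le_finrank_of_injective h
    simp [Module.finrank_fintype_fun_eq_card, Module.finrank_prod, Module.finrank_self] at this
    omega
  obtain ⟨a, b, hab, hne⟩ := Function.not_injective_iff.mp hnotinj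
  have h0 : Φ (a - b) = 0 := by rw [map_sub, hab, sub_self]
  refine ⟨a - b, sub_ne_zero.mpr hne, ?_, congrArg Prod.snd h0⟩
  intro c
  exact congrFun (congrArg Prod.fst h0) c

/-- Let `p` be a generic configuration of `n ≥ d+2` points in `ℂ^d` and let `L` be the
affine space of lifts of its projection to `ℂ^{d-1}` (configurations agreeing with `p`
in all but the last coordinate). Then for any finite list of configurations in `L`, there
is a generic configuration in `L` that is not an affine image of any of them; hence `L`
contains infinitely many generic configurations in pairwise distinct affine classes. -/
theorem stmt19 (n d : ℕ) (hd : 1 ≤ d) (hn : d + 2 ≤ n)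
    (p : Fin n → Fin d → ℂ)
    (hp : AlgebraicIndependent ℚ (fun ik : Fin n × Fin d => p ik.1 ik.2))
    (k : ℕ) (ps : Fin k → (Fin n → Fin d → ℂ))
    (hps : ∀ a : Fin k, ∀ i, ∀ c : Fin d, (c : ℕ) + 1 < d → ps a i c = p i c) :
    ∃ p' : Fin n → Fin d → ℂ,
      (∀ i, ∀ c : Fin d, (c : ℕ) + 1 < d → p' i c = p i c) ∧
      AlgebraicIndependent ℚ (fun ik : Fin n × Fin d => p' ik.1 ik.2) ∧
      ∀ a : Fin k, ¬ ∃ (M : Matrix (Fin d) (Fin d) ℂ) (t : Fin d → ℂ),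
          ∀ i, p' i = M.mulVec (ps a i) + t := by
  classical
  -- the countable field generated by all the data
  set g : (Fin n × Fin d) ⊕ (Fin k × (Fin n × Fin d)) → ℂ :=
    Sum.elim (fun ik => p ik.1 ik.2) (fun w => ps w.1 w.2.1 w.2.2) with hg
  set S : Set ℂ := Set.range g with hS
  set K : IntermediateField ℚ ℂ := IntermediateField.adjoin ℚ S with hK
  have hpK : ∀ i c, p i c ∈ K :=
    fun i c => IntermediateField.subset_adjoin ℚ S ⟨Sum.inl (i, c), rfl⟩
  have hpsK : ∀ a i c, ps a i c ∈ K :=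
    fun a i c => IntermediateField.subset_adjoin ℚ S ⟨Sum.inr (a, (i, c)), rfl⟩
  have hKcard : Cardinal.mk K ≤ Cardinal.aleph0 := by
    refine (IntermediateField.cardinalMk_adjoin_le ℚ S).trans ?_
    haveI : Countable S := (Set.countable_range g).to_subtype
    exact sup_le (sup_le Cardinal.mk_le_aleph0 Cardinal.mk_le_aleph0) le_rfl
  obtain ⟨t, ht⟩ := my_exists_indep K hKcard n
  -- the new configuration
  set p' : Fin n → Fin d → ℂ := fun i c => if (c : ℕ) + 1 < d then p i c else t i with hp'
  -- the index set of the untouched coordinates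
  set ι : Type := {ik : Fin n × Fin d // (ik.2 : ℕ) + 1 < d} with hι
  set x : ι → ℂ := fun j => p j.1.1 j.1.2 with hx
  have hxindep : AlgebraicIndependent ℚ x :=
    hp.comp Subtype.val Subtype.val_injective
  have combined : AlgebraicIndependent ℚ (Sum.elim t x) :=
    my_sumElim_algIndep K x t hxindep (fun j => hpK _ _) ht
  set f : Fin n × Fin d → (Fin n) ⊕ ι :=
    fun ik => if h : (ik.2 : ℕ) + 1 < d then Sum.inr ⟨ik, h⟩ else Sum.inl ik.1 with hf
  have finj : Function.Injective f := by
    intro a b hab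
    by_cases ha : (a.2 : ℕ) + 1 < d <;> by_cases hb : (b.2 : ℕ) + 1 < d <;>
      simp [hf, ha, hb] at hab
    · exact congrArg Subtype.val hab
    · have ha2 : (a.2 : ℕ) = d - 1 := by have := a.2.isLt; omega
      have hb2 : (b.2 : ℕ) = d - 1 := by have := b.2.isLt; omega
      exact Prod.ext hab (Fin.ext (by omega))
  refine ⟨p', fun i c hc => by simp [hp', hc], ?_, ?_⟩
  · have h2 := combined.comp f finj
    have heq : (Sum.elim t x) ∘ f = fun ik : Fin n × Fin d => p' ik.1 ik.2 := by
      funext ik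
      by_cases hik : (ik.2 : ℕ) + 1 < d <;> simp [hf, hp', hx, hik]
    rwa [heq] at h2
  · rintro a ⟨M, tr, h⟩
    set lc : Fin d := ⟨d - 1, by omega⟩ with hlcdef
    have hlc : ¬ ((lc : ℕ) + 1 < d) := by simp [hlcdef]; omega
    obtain ⟨l, hl0, hlw, hl1⟩ :=
      my_exists_ann K n d hn (fun i c => ⟨ps a i c, hpsK a i c⟩)
    have hlwC : ∀ c, ∑ i, (l i : ℂ) * ps a i c = 0 := by
      intro c
      have := congrArg (algebraMap K ℂ) (hlw c)
      rw [map_sum, map_zero] at this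
      simpa [map_mul] using this
    have hl1C : ∑ i, (l i : ℂ) = 0 := by
      have := congrArg (algebraMap K ℂ) hl1
      rw [map_sum, map_zero] at this
      simpa using this
    have hrow : ∀ i, t i = (∑ c, M lc c * ps a i c) + tr lc := by
      intro i
      have h1 := congrFun (h i) lc
      have h2 : p' i lc = t i := if_neg hlc
      rw [h2] at h1
      rw [h1]
      simp [Matrix.mulVec, dotProduct]
    have hzero : ∑ i, (l i : ℂ) * t i = 0 := by
      calc ∑ i, (l i : ℂ) * t i
          = ∑ i, ((∑ c, M lc c * ((l i : ℂ) * ps a i c)) + (l i : ℂ) * tr lc) := by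
            refine Finset.sum_congr rfl fun i _ => ?_
            rw [hrow i, mul_add, Finset.mul_sum]
            congr 1
            exact Finset.sum_congr rfl fun c _ => by ring
        _ = (∑ c, M lc c * ∑ i, (l i : ℂ) * ps a i c) + (∑ i, (l i : ℂ)) * tr lc := by
            rw [Finset.sum_add_distrib, Finset.sum_comm, Finset.sum_mul]
            congr 1
            exact Finset.sum_congr rfl fun c _ => (Finset.mul_sum _ _ _).symm
        _ = 0 := by simp [hlwC, hl1C]
    have hli := ht.linearIndependent
    have hall := Fintype.linearIndependent_iff.mp hli l (by simpa [Algebra.smul_def] using hzero)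
    exact hl0 (funext fun i => hall i)
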